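/- For a fixed natural number n ≥ 1, the function r ↦ C(n+r, n+1) / (n+r) is monotone nondecreasing in r for r ≥ 1, where C denotes binomial coefficients and the quotient is taken in the rational numbers. -/
import Mathlib

lemma nat_step (n r : ℕ) :
    (n + r + 1) * Nat.choose (n + r) (n + 1) ≤ (n + r) * Nat.choose (n + r + 1) (n + 1) := by
  have key : Nat.choose (n + r) (n + 1) * (n + 1) = Nat.choose (n + r) n * r := by
    have := Nat.choose_succ_right_eq (n + r) n
    simpa using this
  have pascal : Nat.choose (n + r + 1) (n + 1)
      = Nat.choose (n + r) n + Nat.choose (n + r) (n + 1) := by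
    rw [Nat.choose_succ_succ]
  rw [pascal]
  nlinarith [Nat.choose_pos (show n ≤ n + r by omega), key]

/-- For fixed `n ≥ 1`, the function `r ↦ C(n+r, n+1) / (n+r)` (in `ℚ`) is monotone
nondecreasing for `r ≥ 1`. -/
theorem choose_div_monotone (n : ℕ) (hn : 1 ≤ n) :
    ∀ r r' : ℕ, 1 ≤ r → r ≤ r' →
      (Nat.choose (n + r) (n + 1) : ℚ) / (n + r) ≤
        (Nat.choose (n + r') (n + 1) : ℚ) / (n + r') := by
  intro r r' hr hle
  induction r' with
  | zero => omega
  | succ k ih =>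
    rcases Nat.lt_or_ge r (k + 1) with h | h
    · have hk : r ≤ k := by omega
      refine (ih hk).trans ?_
      have hkpos : (0 : ℚ) < (n : ℚ) + k := by positivity
      have hk1pos : (0 : ℚ) < (n : ℚ) + (k + 1) := by positivity
      rw [show n + (k + 1) = n + k + 1 by omega]
      push_cast
      rw [div_le_div_iff₀ hkpos hk1pos]
      have := nat_step n k
      have hc : ((n + (k + 1)) * Nat.choose (n + k) (n + 1) : ℚ)
          ≤ ((n + k) * Nat.choose (n + k + 1) (n + 1) : ℚ) := by
        exact_mod_cast (by simpa [Nat.add_assoc] using this)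
      push_cast at hc ⊢
      nlinarith [hc]
    · have : r = k + 1 := by omega
      subst this
      norm_num
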